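/- For f(γ) = (1 − e^{−γ})^M with M ≥ 2 and fixed α > 0, the energy efficiency function u(p) = f(α p)/p on (0, ∞) attains its maximum uniquely at p* = γ̄/α, where γ̄ is the unique positive solution of γ f'(γ) = f(γ). -/

import Mathlib

open Real Set

private lemma psi_hasDeriv (M : ℕ) (x : ℝ) :
    HasDerivAt (fun γ : ℝ => (M : ℝ) * γ - Real.exp γ + 1) ((M : ℝ) - Real.exp x) x := by
  have h := (((hasDerivAt_id x).const_mul (M : ℝ)).sub (Real.hasDerivAt_exp x)).add_const 1
  simpa using h

private lemma psi_sign (M : ℕ) (hM : 2 ≤ M) (γbar : ℝ) (hγpos : 0 < γbar)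
    (hroot : (M : ℝ) * γbar - Real.exp γbar + 1 = 0) :
    (∀ x, 0 < x → x < γbar → 0 < (M : ℝ) * x - Real.exp x + 1) ∧
    (∀ x, γbar < x → (M : ℝ) * x - Real.exp x + 1 < 0) := by
  set ψ : ℝ → ℝ := fun γ => (M : ℝ) * γ - Real.exp γ + 1 with hψ
  have hM1 : (1 : ℝ) < (M : ℝ) := by exact_mod_cast lt_of_lt_of_le one_lt_two hM
  have hlog : 0 < Real.log M := Real.log_pos hM1
  have hcont : Continuous ψ := by fun_prop
  have hmono : StrictMonoOn ψ (Icc 0 (Real.log M)) := by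
    apply strictMonoOn_of_deriv_pos (convex_Icc _ _) hcont.continuousOn
    intro x hx
    rw [interior_Icc] at hx
    rw [(psi_hasDeriv M x).deriv]
    have hx2 : Real.exp x < M := by
      calc Real.exp x < Real.exp (Real.log M) := Real.exp_lt_exp.mpr hx.2
        _ = M := Real.exp_log (by linarith)
    linarith
  have hanti : StrictAntiOn ψ (Ici (Real.log M)) := by
    apply strictAntiOn_of_deriv_neg (convex_Ici _) hcont.continuousOn
    intro x hx
    rw [interior_Ici] at hx
    rw [(psi_hasDeriv M x).deriv]
    have hx2 : (M : ℝ) < Real.exp x := by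
      calc (M : ℝ) = Real.exp (Real.log M) := (Real.exp_log (by linarith)).symm
        _ < Real.exp x := Real.exp_lt_exp.mpr hx
    linarith
  have hψ0 : ψ 0 = 0 := by simp [hψ]
  have hψγ : ψ γbar = 0 := hroot
  have hγgt : Real.log M < γbar := by
    by_contra h
    push_neg at h
    have := hmono (by constructor <;> linarith) ⟨le_of_lt hγpos, h⟩ hγpos
    rw [hψ0, hψγ] at this
    exact lt_irrefl 0 this
  constructor
  · intro x hx0 hxγ
    rcases le_or_gt x (Real.log M) with h | h
    · have := hmono ⟨le_refl 0, le_of_lt hlog⟩ ⟨le_of_lt hx0, h⟩ hx0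
      rw [hψ0] at this
      exact this
    · have := hanti (le_of_lt h) (le_of_lt (lt_trans h hxγ)) hxγ
      rw [hψγ] at this
      exact this
  · intro x hx
    have := hanti (le_of_lt hγgt) (le_of_lt (lt_trans hγgt hx)) hx
    rw [hψγ] at this
    exact this

private lemma g_hasDeriv (M : ℕ) (x : ℝ) (hx : x ≠ 0) :
    HasDerivAt (fun γ : ℝ => (1 - Real.exp (-γ)) ^ M / γ)
      (((M : ℝ) * (1 - Real.exp (-x)) ^ (M - 1) * Real.exp (-x) * x
        - (1 - Real.exp (-x)) ^ M * 1) / x ^ 2) x := by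
  have h1 : HasDerivAt (fun γ : ℝ => Real.exp (-γ)) (-Real.exp (-x)) x := by
    simpa [Function.comp_def] using (Real.hasDerivAt_exp (-x)).comp x (hasDerivAt_neg x)
  have h2 : HasDerivAt (fun γ : ℝ => 1 - Real.exp (-γ)) (Real.exp (-x)) x := by
    simpa [Pi.sub_def] using (hasDerivAt_const x (1 : ℝ)).sub h1
  exact (h2.pow M).div (hasDerivAt_id x) hx

/-- For `f(γ) = (1 − e^{−γ})^M`, `M ≥ 2`, and fixed `α > 0`, the
energy-efficiency function `u(p) = f(αp)/p` on `(0,∞)` attains its maximum uniquely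
at `p* = γ̄/α`, where `γ̄` is the unique positive solution of `γ f'(γ) = f(γ)`. -/
theorem energy_efficiency_unique_maximizer
    (M : ℕ) (hM : 2 ≤ M) (α : ℝ) (hα : 0 < α) (γbar : ℝ)
    (hγ : 0 < γbar ∧
      γbar * (M * Real.exp (-γbar) * (1 - Real.exp (-γbar)) ^ (M - 1)) =
        (1 - Real.exp (-γbar)) ^ M)
    (u : ℝ → ℝ) (hu : ∀ p, u p = (1 - Real.exp (-(α * p))) ^ M / p) :
    ∀ p : ℝ, 0 < p → p ≠ γbar / α → u p < u (γbar / α) := by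
  obtain ⟨hγpos, hroot⟩ := hγ
  set g : ℝ → ℝ := fun γ => (1 - Real.exp (-γ)) ^ M / γ with hg
  have hApos : ∀ x : ℝ, 0 < x → 0 < 1 - Real.exp (-x) := by
    intro x hx
    have : Real.exp (-x) < 1 := by
      rw [Real.exp_lt_one_iff]; linarith
    linarith
  have hA := hApos γbar hγpos
  -- derive ψ(γbar) = 0
  have hroot' : (M : ℝ) * γbar - Real.exp γbar + 1 = 0 := by
    have hMsplit : (1 - Real.exp (-γbar)) ^ M
        = (1 - Real.exp (-γbar)) ^ (M - 1) * (1 - Real.exp (-γbar)) := by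
      rw [← pow_succ]; congr 1; omega
    rw [hMsplit] at hroot
    have hApow : (0 : ℝ) < (1 - Real.exp (-γbar)) ^ (M - 1) := pow_pos hA _
    have h1 : γbar * ((M : ℝ) * Real.exp (-γbar)) = 1 - Real.exp (-γbar) :=
      mul_right_cancel₀ hApow.ne'
        (show γbar * ((M : ℝ) * Real.exp (-γbar)) * (1 - Real.exp (-γbar)) ^ (M - 1)
            = (1 - Real.exp (-γbar)) * (1 - Real.exp (-γbar)) ^ (M - 1) from by
          linear_combination hroot)
    have he : Real.exp (-γbar) * Real.exp γbar = 1 := by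
      rw [← Real.exp_add]; simp
    nlinarith [Real.exp_pos γbar, h1, he]
  obtain ⟨hpos, hneg⟩ := psi_sign M hM γbar hγpos hroot'
  -- compute deriv g
  have hgderiv : ∀ x : ℝ, 0 < x → deriv g x
      = (1 - Real.exp (-x)) ^ (M - 1) * Real.exp (-x)
        * ((M : ℝ) * x - Real.exp x + 1) / x ^ 2 := by
    intro x hx
    have hMsplit : (1 - Real.exp (-x)) ^ M
        = (1 - Real.exp (-x)) ^ (M - 1) * (1 - Real.exp (-x)) := by
      rw [← pow_succ]; congr 1; omega
    have he : Real.exp (-x) * Real.exp x = 1 := by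
      rw [← Real.exp_add]; simp
    have hnum : (M : ℝ) * (1 - Real.exp (-x)) ^ (M - 1) * Real.exp (-x) * x
        - (1 - Real.exp (-x)) ^ M * 1
        = (1 - Real.exp (-x)) ^ (M - 1) * Real.exp (-x)
          * ((M : ℝ) * x - Real.exp x + 1) := by
      rw [hMsplit]
      linear_combination ((1 - Real.exp (-x)) ^ (M - 1)) * he
    rw [(g_hasDeriv M x hx.ne').deriv, hnum]
  -- monotonicity
  have hmono : StrictMonoOn g (Ioc 0 γbar) := by
    apply strictMonoOn_of_deriv_pos (convex_Ioc _ _)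
    · intro x hx
      exact ((g_hasDeriv M x (ne_of_gt hx.1)).continuousAt).continuousWithinAt
    · intro x hx
      rw [interior_Ioc] at hx
      rw [hgderiv x hx.1]
      apply div_pos
      · exact mul_pos (mul_pos (pow_pos (hApos x hx.1) _) (Real.exp_pos _))
          (hpos x hx.1 hx.2)
      · exact pow_pos hx.1 2
  have hanti : StrictAntiOn g (Ici γbar) := by
    apply strictAntiOn_of_deriv_neg (convex_Ici _)
    · intro x hx
      have hx0 : 0 < x := lt_of_lt_of_le hγpos hx
      exact ((g_hasDeriv M x (ne_of_gt hx0)).continuousAt).continuousWithinAt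
    · intro x hx
      rw [interior_Ici] at hx
      have hx0 : 0 < x := lt_trans hγpos hx
      rw [hgderiv x hx0]
      apply div_neg_of_neg_of_pos
      · exact mul_neg_of_pos_of_neg
          (mul_pos (pow_pos (hApos x hx0) _) (Real.exp_pos _)) (hneg x hx)
      · exact pow_pos hx0 2
  have key : ∀ y : ℝ, 0 < y → y ≠ γbar → g y < g γbar := by
    intro y hy hne
    rcases lt_or_gt_of_ne hne with h | h
    · exact hmono ⟨hy, le_of_lt h⟩ ⟨hγpos, le_refl _⟩ h
    · exact hanti (Set.mem_Ici.mpr (le_refl _)) (le_of_lt h) h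
  intro p hp hpne
  have hαp : 0 < α * p := mul_pos hα hp
  have h1 : u p = α * g (α * p) := by
    rw [hu, hg]
    field_simp
  have hdiv : α * (γbar / α) = γbar := by field_simp
  have h2 : u (γbar / α) = α * g γbar := by
    rw [hu, hg, hdiv]
    simp only
    rw [div_div_eq_mul_div]
    ring
  have hne2 : α * p ≠ γbar := by
    intro h
    apply hpne
    field_simp
    linarith
  rw [h1, h2]
  exact mul_lt_mul_of_pos_left (key (α * p) hαp hne2) hα
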